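/- Let X, Z, S be nonempty finite types, let p be a probability mass function on X × S whose X-marginal p(x) is strictly positive for all x, and fix β > 0. For a family of conditional probability mass functions q(·|x) on Z (one for each x ∈ X) with q(z|x) > 0 for all x, z, define the marginal q(z) = Σ_x p(x) q(z|x), the decoder q(s|z) = (Σ_x p(x, s) q(z|x)) / q(z), the mutual informations I(X;Z) = Σ_{x,z} p(x) q(z|x) log( q(z|x) / q(z) ) and I(Z;S) = Σ_{z,s} q(z) q(s|z) log( q(s|z) / p_S(s) ) where p_S(s) = Σ_x p(x, s), and the Lagrangian L(q) = I(X;Z) − β I(Z;S). If q is a local minimizer of L over the set of strictly positive conditional families (with each q(·|x) constrained to sum to 1), then q satisfies the information-bottleneck self-consistent equations: for all x, z, q(z|x) = q(z) exp(−β D_KL(p(·|x) ‖ q(·|z))) / Z(x, β), where p(s|x) = p(x, s)/p(x), D_KL(p(·|x) ‖ q(·|z)) = Σ_s p(s|x) log( p(s|x) / q(s|z) ) (with the convention 0 log 0 = 0), and Z(x, β) = Σ_{z′} q(z′) exp(−β D_KL(p(·|x) ‖ q(·|z′))) is the normalizing partition function. -/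

import Mathlib

open scoped BigOperators
set_option linter.unusedSectionVars false
set_option linter.unusedVariables false

variable {X Z S : Type*} [Fintype X] [Fintype Z] [Fintype S]

/-- `X`-marginal `p(x) = Σ_s p(x, s)` of a joint pmf on `X × S`. -/
noncomputable def margX (p : X × S → ℝ) (x : X) : ℝ := ∑ s, p (x, s)

/-- `S`-marginal `p_S(s) = Σ_x p(x, s)` of a joint pmf on `X × S`. -/
noncomputable def margS (p : X × S → ℝ) (s : S) : ℝ := ∑ x, p (x, s)

/-- Marginal of the bottleneck variable: `q(z) = Σ_x p(x) q(z|x)`. -/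
noncomputable def margZ (p : X × S → ℝ) (r : X → Z → ℝ) (z : Z) : ℝ := ∑ x, margX p x * r x z

/-- The decoder `q(s|z) = (Σ_x p(x, s) q(z|x)) / q(z)`. -/
noncomputable def decoder (p : X × S → ℝ) (r : X → Z → ℝ) (z : Z) (s : S) : ℝ :=
  (∑ x, p (x, s) * r x z) / margZ p r z

/-- Mutual information `I(X;Z) = Σ_{x,z} p(x) q(z|x) log(q(z|x) / q(z))`. -/
noncomputable def mutualXZ (p : X × S → ℝ) (r : X → Z → ℝ) : ℝ :=
  ∑ x, ∑ z, margX p x * r x z * Real.log (r x z / margZ p r z)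

/-- Mutual information `I(Z;S) = Σ_{z,s} q(z) q(s|z) log(q(s|z) / p_S(s))`. -/
noncomputable def mutualZS (p : X × S → ℝ) (r : X → Z → ℝ) : ℝ :=
  ∑ z, ∑ s, margZ p r z * decoder p r z s * Real.log (decoder p r z s / margS p s)

/-- The information-bottleneck Lagrangian `L(q) = I(X;Z) − β I(Z;S)`. -/
noncomputable def ibLagrangian (p : X × S → ℝ) (β : ℝ) (r : X → Z → ℝ) : ℝ :=
  mutualXZ p r - β * mutualZS p r

/-- The constraint set of strictly positive conditional families: each
`q(·|x)` is strictly positive and sums to `1`. -/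
def condFamilies (X Z : Type*) [Fintype Z] : Set (X → Z → ℝ) :=
  {r | (∀ x z, 0 < r x z) ∧ ∀ x, ∑ z, r x z = 1}

/-- `D_KL(p(·|x) ‖ q(·|z)) = Σ_s p(s|x) log(p(s|x) / q(s|z))` where
`p(s|x) = p(x,s)/p(x)` (with the convention `0 log 0 = 0`, automatic here
since `Real.log 0 = 0` and multiplication by `0` kills the term). -/
noncomputable def klCond (p : X × S → ℝ) (r : X → Z → ℝ) (x : X) (z : Z) : ℝ :=
  ∑ s, (p (x, s) / margX p x) * Real.log ((p (x, s) / margX p x) / decoder p r z s)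

/-- The partition function `Z(x, β) = Σ_{z′} q(z′) exp(−β D_KL(p(·|x)‖q(·|z′)))`. -/
noncomputable def partitionFn (p : X × S → ℝ) (β : ℝ) (r : X → Z → ℝ) (x : X) : ℝ :=
  ∑ z', margZ p r z' * Real.exp (-β * klCond p r x z')

section helpers
variable {X Z S : Type*} [Fintype X] [Fintype Z] [Fintype S]

lemma margZ_pos' [Nonempty X] (p : X × S → ℝ) (hpX : ∀ x, 0 < margX p x)
    (r : X → Z → ℝ) (hr : ∀ x z, 0 < r x z) (z : Z) : 0 < margZ p r z :=
  Finset.sum_pos (fun x _ => mul_pos (hpX x) (hr x z)) Finset.univ_nonempty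

lemma sum_s_J (p : X × S → ℝ) (r : X → Z → ℝ) (z : Z) :
    ∑ s, ∑ x, p (x, s) * r x z = margZ p r z := by
  rw [Finset.sum_comm]
  refine Finset.sum_congr rfl fun x _ => ?_
  rw [margX, Finset.sum_mul]

lemma decomp [Nonempty X] (p : X × S → ℝ) (hp0 : ∀ a, 0 ≤ p a)
    (hpX : ∀ x, 0 < margX p x) (β : ℝ)
    (r : X → Z → ℝ) (hr : ∀ x z, 0 < r x z) :
    ibLagrangian p β r =
      ((∑ x, ∑ z, margX p x * (r x z * Real.log (r x z)))
        - ∑ z, margZ p r z * Real.log (margZ p r z))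
      - β * ((∑ z, ∑ s, (∑ x, p (x, s) * r x z) * Real.log (∑ x, p (x, s) * r x z))
             - (∑ z, margZ p r z * Real.log (margZ p r z))
             - ∑ z, ∑ s, (∑ x, p (x, s) * r x z) * Real.log (margS p s)) := by
  have hQ : ∀ z, 0 < margZ p r z := margZ_pos' p hpX r hr
  have hJ0 : ∀ z s, 0 ≤ ∑ x, p (x, s) * r x z :=
    fun z s => Finset.sum_nonneg fun x _ => mul_nonneg (hp0 _) (hr x z).le
  have hXZ : mutualXZ p r = (∑ x, ∑ z, margX p x * (r x z * Real.log (r x z)))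
      - ∑ z, margZ p r z * Real.log (margZ p r z) := by
    unfold mutualXZ
    have h : ∀ x z, margX p x * r x z * Real.log (r x z / margZ p r z)
        = margX p x * (r x z * Real.log (r x z)) - margX p x * r x z * Real.log (margZ p r z) := by
      intro x z
      rw [Real.log_div (hr x z).ne' (hQ z).ne']; ring
    simp_rw [h, Finset.sum_sub_distrib]
    congr 1
    rw [Finset.sum_comm]
    refine Finset.sum_congr rfl fun z _ => ?_
    rw [margZ, Finset.sum_mul]
  have key : ∀ z s, margZ p r z * decoder p r z s * Real.log (decoder p r z s / margS p s)
      = (∑ x, p (x, s) * r x z) * Real.log (∑ x, p (x, s) * r x z)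
        - (∑ x, p (x, s) * r x z) * Real.log (margZ p r z)
        - (∑ x, p (x, s) * r x z) * Real.log (margS p s) := by
    intro z s
    rcases eq_or_lt_of_le (hJ0 z s) with h | h
    · rw [decoder, ← h]; simp
    · have hS : 0 < margS p s := by
        by_contra hS
        push_neg at hS
        have hS0 : margS p s = 0 := le_antisymm hS (Finset.sum_nonneg fun x _ => hp0 _)
        have hall : ∀ x ∈ Finset.univ, p (x, s) = 0 :=
          (Finset.sum_eq_zero_iff_of_nonneg (fun x _ => hp0 (x, s))).mp hS0
        have : (∑ x, p (x, s) * r x z) = 0 :=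
          Finset.sum_eq_zero fun x hx => by rw [hall x hx, zero_mul]
        linarith
      rw [decoder, Real.log_div (div_pos h (hQ z)).ne' hS.ne',
        Real.log_div h.ne' (hQ z).ne', mul_div_cancel₀ _ (hQ z).ne']
      ring
  have hZS : mutualZS p r = (∑ z, ∑ s, (∑ x, p (x, s) * r x z) * Real.log (∑ x, p (x, s) * r x z))
      - (∑ z, margZ p r z * Real.log (margZ p r z))
      - ∑ z, ∑ s, (∑ x, p (x, s) * r x z) * Real.log (margS p s) := by
    unfold mutualZS
    simp_rw [key, Finset.sum_sub_distrib]
    congr 2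
    refine Finset.sum_congr rfl fun z _ => ?_
    rw [← Finset.sum_mul, sum_s_J]
  rw [ibLagrangian, hXZ, hZS]


lemma kl_expand [Nonempty X] (p : X × S → ℝ) (hp0 : ∀ a, 0 ≤ p a)
    (hpX : ∀ x, 0 < margX p x) (q : X → Z → ℝ) (hqpos : ∀ x z, 0 < q x z) (x : X) (z : Z) :
    margX p x * klCond p q x z
      = (∑ s, p (x, s) * Real.log (p (x, s) / margX p x))
        - (∑ s, p (x, s) * Real.log (∑ x', p (x', s) * q x' z))
        + margX p x * Real.log (margZ p q z) := by
  have hQ : 0 < margZ p q z := margZ_pos' p hpX q hqpos z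
  have hP := hpX x
  rw [klCond, Finset.mul_sum]
  have per : ∀ s, margX p x * (p (x, s) / margX p x * Real.log ((p (x, s) / margX p x) / decoder p q z s))
      = p (x, s) * Real.log (p (x, s) / margX p x)
        - p (x, s) * Real.log (∑ x', p (x', s) * q x' z)
        + p (x, s) * Real.log (margZ p q z) := by
    intro s
    rcases eq_or_lt_of_le (hp0 (x, s)) with h0 | h0
    · rw [← h0]; simp
    · have hJ : 0 < ∑ x', p (x', s) * q x' z := by
        have hle : p (x, s) * q x z ≤ ∑ x', p (x', s) * q x' z :=
          Finset.single_le_sum (fun x' _ => mul_nonneg (hp0 (x', s)) (hqpos x' z).le) (Finset.mem_univ x)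
        exact lt_of_lt_of_le (mul_pos h0 (hqpos x z)) hle
      have hd : decoder p q z s = (∑ x', p (x', s) * q x' z) / margZ p q z := rfl
      rw [hd, Real.log_div (div_pos h0 hP).ne' (div_pos hJ hQ).ne',
        Real.log_div h0.ne' hP.ne', Real.log_div hJ.ne' hQ.ne']
      field_simp
      ring
  simp_rw [per, Finset.sum_add_distrib, Finset.sum_sub_distrib, ← Finset.sum_mul]
  congr 2
end helpers
section deltas
variable {X Z S : Type*} [Fintype X] [Fintype Z] [Fintype S]

noncomputable def uu [DecidableEq Z] (z1 z2 z : Z) : ℝ :=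
  (if z = z1 then 1 else 0) - (if z = z2 then 1 else 0)

lemma uu_abs [DecidableEq Z] (z1 z2 z : Z) : |uu z1 z2 z| ≤ 1 := by
  unfold uu; split_ifs <;> norm_num

lemma sum_uu [DecidableEq Z] (z1 z2 : Z) : ∑ z, uu z1 z2 z = 0 := by
  simp [uu, Finset.sum_sub_distrib]

lemma sum_cu [DecidableEq Z] (z1 z2 : Z) (c : ℝ) (F : Z → ℝ) :
    ∑ z, (c * uu z1 z2 z) * F z = c * F z1 - c * F z2 := by
  simp [uu, mul_sub, sub_mul, Finset.sum_sub_distrib, ite_mul, mul_ite]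

lemma sum_sum_cu [DecidableEq Z] (z1 z2 : Z) (c : S → ℝ) (F : Z → S → ℝ) :
    ∑ z, ∑ s, (c s * uu z1 z2 z) * F z s
      = (∑ s, c s * F z1 s) - (∑ s, c s * F z2 s) := by
  rw [Finset.sum_comm, ← Finset.sum_sub_distrib]
  refine Finset.sum_congr rfl fun s _ => ?_
  have := sum_cu z1 z2 (c s) (fun z => F z s)
  simpa using this

lemma sum_sum_v [DecidableEq X] [DecidableEq Z] (x0 : X) (z1 z2 : Z) (c : X → ℝ)
    (F : X → Z → ℝ) :
    ∑ x, ∑ z, c x * ((if x = x0 then uu z1 z2 z else 0) * F x z)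
      = c x0 * F x0 z1 - c x0 * F x0 z2 := by
  have h : ∀ x, ∑ z, c x * ((if x = x0 then uu z1 z2 z else 0) * F x z)
      = if x = x0 then (∑ z, (c x * uu z1 z2 z) * F x z) else 0 := by
    intro x
    by_cases hx : x = x0 <;> simp [hx, mul_assoc]
  simp_rw [h, Finset.sum_ite_eq' Finset.univ x0, Finset.mem_univ, if_true]
  exact sum_cu z1 z2 (c x0) (F x0)

end deltas

lemma hasDerivAt_affine_xlogx {a c : ℝ} (h : 0 < a ∨ (a = 0 ∧ c = 0)) :
    HasDerivAt (fun t : ℝ => (a + t * c) * Real.log (a + t * c)) (c * (Real.log a + 1)) 0 := by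
  rcases h with ha | ⟨ha, hc⟩
  · have haff : HasDerivAt (fun t : ℝ => a + t * c) c 0 := by
      simpa using ((hasDerivAt_id (0:ℝ)).mul_const c).const_add a
    have hlog : HasDerivAt (fun y : ℝ => y * Real.log y) (Real.log a + 1) (a + 0 * c) := by
      simpa using Real.hasDerivAt_mul_log (by simpa using ha.ne')
    have := hlog.comp 0 haff
    simpa [mul_comm, Function.comp_def] using this
  · subst ha; subst hc
    simpa using (hasDerivAt_const (0:ℝ) (0:ℝ))

lemma hasDerivAt_affine_mul {a c d : ℝ} :
    HasDerivAt (fun t : ℝ => (a + t * c) * d) (c * d) 0 := by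
  simpa using (((hasDerivAt_id (0:ℝ)).mul_const c).const_add a).mul_const d
section stat
variable {X Z S : Type*} [Fintype X] [Fintype Z] [Fintype S]

lemma stationarity [Nonempty X] [Nonempty Z] [Nonempty S]
    (p : X × S → ℝ) (hp0 : ∀ a, 0 ≤ p a) (hpX : ∀ x, 0 < margX p x)
    (β : ℝ) (q : X → Z → ℝ) (hq : q ∈ condFamilies X Z)
    (hmin : IsLocalMinOn (ibLagrangian p β) (condFamilies X Z) q)
    (x0 : X) (z1 z2 : Z) :
    Real.log (q x0 z1) - Real.log (margZ p q z1) + β * klCond p q x0 z1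
      = Real.log (q x0 z2) - Real.log (margZ p q z2) + β * klCond p q x0 z2 := by
  classical
  obtain ⟨hqpos, hqsum⟩ := hq
  have hQpos : ∀ z, 0 < margZ p q z := margZ_pos' p hpX q hqpos
  have hJ0 : ∀ z s, 0 ≤ ∑ x, p (x, s) * q x z :=
    fun z s => Finset.sum_nonneg fun x _ => mul_nonneg (hp0 _) (hqpos x z).le
  set v : X → Z → ℝ := fun x z => if x = x0 then uu z1 z2 z else 0 with hv
  have hv_abs : ∀ x z, |v x z| ≤ 1 := by
    intro x z; rw [hv]; dsimp only
    split_ifs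
    · exact uu_abs z1 z2 z
    · norm_num
  -- a positive lower bound on q
  obtain ⟨xz, -, hxz⟩ := Finset.exists_min_image (Finset.univ : Finset (X × Z))
    (fun a => q a.1 a.2) Finset.univ_nonempty
  set ε : ℝ := q xz.1 xz.2 with hε
  have hεpos : 0 < ε := hqpos _ _
  have hεle : ∀ x z, ε ≤ q x z := fun x z => hxz (x, z) (Finset.mem_univ _)
  -- membership in the constraint set
  have hmem : ∀ t : ℝ, |t| < ε → (fun x z => q x z + t * v x z) ∈ condFamilies X Z := by
    intro t ht
    constructor
    · intro x z
      have h1 : |t * v x z| ≤ |t| := by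
        rw [abs_mul]
        calc |t| * |v x z| ≤ |t| * 1 := by
              exact mul_le_mul_of_nonneg_left (hv_abs x z) (abs_nonneg t)
          _ = |t| := mul_one _
      have h2 : -(t * v x z) ≤ |t| := (neg_le_abs _).trans h1
      have := hεle x z
      dsimp only
      linarith
    · intro x
      have hzero : ∑ z, t * v x z = 0 := by
        rw [hv]; dsimp only
        by_cases hx : x = x0
        · simp [hx, ← Finset.mul_sum, sum_uu]
        · simp [hx]
      calc ∑ z, (q x z + t * v x z) = (∑ z, q x z) + ∑ z, t * v x z :=
            Finset.sum_add_distrib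
        _ = 1 := by rw [hqsum x, hzero, add_zero]
  -- affine formulas for the perturbed marginals
  have hQt : ∀ (t : ℝ) (z : Z),
      margZ p (fun x z => q x z + t * v x z) z
        = margZ p q z + t * (margX p x0 * uu z1 z2 z) := by
    intro t z
    rw [margZ, margZ]
    simp only [mul_add, Finset.sum_add_distrib]
    congr 1
    have h : ∀ x, margX p x * (t * v x z)
        = if x = x0 then margX p x * (t * uu z1 z2 z) else 0 := by
      intro x; rw [hv]; dsimp only; split_ifs <;> simp
    simp_rw [h, Finset.sum_ite_eq' Finset.univ x0, Finset.mem_univ, if_true]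
    ring
  have hJt : ∀ (t : ℝ) (z : Z) (s : S),
      (∑ x, p (x, s) * (q x z + t * v x z))
        = (∑ x, p (x, s) * q x z) + t * (p (x0, s) * uu z1 z2 z) := by
    intro t z s
    simp only [mul_add, Finset.sum_add_distrib]
    congr 1
    have h : ∀ x, p (x, s) * (t * v x z)
        = if x = x0 then p (x, s) * (t * uu z1 z2 z) else 0 := by
      intro x; rw [hv]; dsimp only; split_ifs <;> simp
    simp_rw [h, Finset.sum_ite_eq' Finset.univ x0, Finset.mem_univ, if_true]
    ring
  -- the nice form of the Lagrangian along the path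
  set g : ℝ → ℝ := fun t =>
    ((∑ x, ∑ z, margX p x * ((q x z + t * v x z) * Real.log (q x z + t * v x z)))
      - ∑ z, (margZ p q z + t * (margX p x0 * uu z1 z2 z))
          * Real.log (margZ p q z + t * (margX p x0 * uu z1 z2 z)))
    - β * ((∑ z, ∑ s, ((∑ x, p (x, s) * q x z) + t * (p (x0, s) * uu z1 z2 z))
            * Real.log ((∑ x, p (x, s) * q x z) + t * (p (x0, s) * uu z1 z2 z)))
          - (∑ z, (margZ p q z + t * (margX p x0 * uu z1 z2 z))
              * Real.log (margZ p q z + t * (margX p x0 * uu z1 z2 z)))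
          - ∑ z, ∑ s, ((∑ x, p (x, s) * q x z) + t * (p (x0, s) * uu z1 z2 z))
              * Real.log (margS p s)) with hg
  have hfg : ∀ t : ℝ, |t| < ε → ibLagrangian p β (fun x z => q x z + t * v x z) = g t := by
    intro t ht
    rw [decomp p hp0 hpX β _ (hmem t ht).1, hg]
    simp only [hQt, hJt]
  -- local minimality of g at 0
  have hev : ∀ᶠ t : ℝ in nhds 0, |t| < ε := by
    have := eventually_abs_sub_lt (0:ℝ) hεpos
    simpa using this
  have h0 : (fun x z => q x z + (0:ℝ) * v x z) = q := by funext x z; simp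
  have hcont : Continuous (fun t : ℝ => fun x z => q x z + t * v x z) := by
    refine continuous_pi fun x => continuous_pi fun z => ?_
    exact continuous_const.add (continuous_id.mul continuous_const)
  have htend : Filter.Tendsto (fun t : ℝ => fun x z => q x z + t * v x z)
      (nhds 0) (nhdsWithin q (condFamilies X Z)) := by
    rw [tendsto_nhdsWithin_iff]
    constructor
    · have := hcont.tendsto 0
      rwa [h0] at this
    · exact hev.mono fun t ht => hmem t ht
  have hlocmin : IsLocalMin (fun t : ℝ => ibLagrangian p β (fun x z => q x z + t * v x z)) 0 := by
    have h1 := htend.eventually hmin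
    refine h1.mono fun t ht => ?_
    simpa [h0] using ht
  have hlocming : IsLocalMin g 0 := by
    refine hlocmin.congr ?_
    exact hev.mono fun t ht => (hfg t ht)
  -- the derivative of g at 0
  set A' : ℝ := ∑ x, ∑ z, margX p x * (v x z * (Real.log (q x z) + 1)) with hA'
  set B' : ℝ := ∑ z, (margX p x0 * uu z1 z2 z) * (Real.log (margZ p q z) + 1) with hB'
  set T1' : ℝ := ∑ z, ∑ s, (p (x0, s) * uu z1 z2 z)
      * (Real.log (∑ x, p (x, s) * q x z) + 1) with hT1'
  set T3' : ℝ := ∑ z, ∑ s, (p (x0, s) * uu z1 z2 z) * Real.log (margS p s) with hT3'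
  have hA : HasDerivAt (fun t : ℝ =>
      ∑ x, ∑ z, margX p x * ((q x z + t * v x z) * Real.log (q x z + t * v x z))) A' 0 := by
    rw [hA']
    exact HasDerivAt.fun_sum fun x _ => HasDerivAt.fun_sum fun z _ =>
      ((hasDerivAt_affine_xlogx (Or.inl (hqpos x z))).const_mul (margX p x))
  have hB : HasDerivAt (fun t : ℝ =>
      ∑ z, (margZ p q z + t * (margX p x0 * uu z1 z2 z))
        * Real.log (margZ p q z + t * (margX p x0 * uu z1 z2 z))) B' 0 := by
    rw [hB']
    exact HasDerivAt.fun_sum fun z _ => hasDerivAt_affine_xlogx (Or.inl (hQpos z))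
  have hT1 : HasDerivAt (fun t : ℝ =>
      ∑ z, ∑ s, ((∑ x, p (x, s) * q x z) + t * (p (x0, s) * uu z1 z2 z))
        * Real.log ((∑ x, p (x, s) * q x z) + t * (p (x0, s) * uu z1 z2 z))) T1' 0 := by
    rw [hT1']
    refine HasDerivAt.fun_sum fun z _ => HasDerivAt.fun_sum fun s _ => ?_
    refine hasDerivAt_affine_xlogx ?_
    rcases eq_or_lt_of_le (hJ0 z s) with h | h
    · refine Or.inr ⟨h.symm, ?_⟩
      have hall := (Finset.sum_eq_zero_iff_of_nonneg
        (fun x _ => mul_nonneg (hp0 (x, s)) (hqpos x z).le)).mp h.symm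
      have hx0 := hall x0 (Finset.mem_univ x0)
      have : p (x0, s) = 0 := by
        rcases mul_eq_zero.mp hx0 with h' | h'
        · exact h'
        · exact absurd h' (hqpos x0 z).ne'
      rw [this, zero_mul]
    · exact Or.inl h
  have hT3 : HasDerivAt (fun t : ℝ =>
      ∑ z, ∑ s, ((∑ x, p (x, s) * q x z) + t * (p (x0, s) * uu z1 z2 z))
        * Real.log (margS p s)) T3' 0 := by
    rw [hT3']
    exact HasDerivAt.fun_sum fun z _ => HasDerivAt.fun_sum fun s _ => hasDerivAt_affine_mul
  have hgderiv : HasDerivAt g ((A' - B') - β * (T1' - B' - T3')) 0 := by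
    rw [hg]
    exact (hA.sub hB).sub (((hT1.sub hB).sub hT3).const_mul β)
  have hD0 : (A' - B') - β * (T1' - B' - T3') = 0 :=
    hlocming.hasDerivAt_eq_zero hgderiv
  -- simplify the derivative
  have hA'v : A' = margX p x0 * (Real.log (q x0 z1) + 1)
      - margX p x0 * (Real.log (q x0 z2) + 1) := by
    rw [hA', hv]
    exact sum_sum_v x0 z1 z2 (fun x => margX p x) (fun x z => Real.log (q x z) + 1)
  have hB'v : B' = margX p x0 * (Real.log (margZ p q z1) + 1)
      - margX p x0 * (Real.log (margZ p q z2) + 1) := by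
    rw [hB']
    exact sum_cu z1 z2 (margX p x0) (fun z => Real.log (margZ p q z) + 1)
  have hT1'v : T1' = (∑ s, p (x0, s) * (Real.log (∑ x, p (x, s) * q x z1) + 1))
      - ∑ s, p (x0, s) * (Real.log (∑ x, p (x, s) * q x z2) + 1) := by
    rw [hT1']
    exact sum_sum_cu z1 z2 (fun s => p (x0, s))
      (fun z s => Real.log (∑ x, p (x, s) * q x z) + 1)
  have hT3'v : T3' = 0 := by
    rw [hT3', sum_sum_cu z1 z2 (fun s => p (x0, s)) (fun _ s => Real.log (margS p s))]
    ring
  have hplus : ∀ z : Z, ∑ s, p (x0, s) * (Real.log (∑ x, p (x, s) * q x z) + 1)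
      = (∑ s, p (x0, s) * Real.log (∑ x, p (x, s) * q x z)) + margX p x0 := by
    intro z
    simp [mul_add, Finset.sum_add_distrib, margX]
  have hkl := fun z => kl_expand p hp0 hpX q hqpos x0 z
  rw [hA'v, hB'v, hT1'v, hT3'v, hplus z1, hplus z2] at hD0
  have hW : margX p x0 *
      ((Real.log (q x0 z1) - Real.log (margZ p q z1) + β * klCond p q x0 z1)
        - (Real.log (q x0 z2) - Real.log (margZ p q z2) + β * klCond p q x0 z2)) = 0 := by
    linear_combination hD0 + β * hkl z1 - β * hkl z2
  have := mul_eq_zero.mp hW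
  rcases this with h | h
  · exact absurd h (hpX x0).ne'
  · linarith
end stat

/-- A local minimizer of the information-bottleneck Lagrangian over the set of
strictly positive conditional families satisfies the IB self-consistent
equations `q(z|x) = q(z) exp(−β D_KL(p(·|x)‖q(·|z))) / Z(x, β)`. -/
theorem ib_local_min_self_consistent
    {X Z S : Type*} [Fintype X] [Fintype Z] [Fintype S]
    [Nonempty X] [Nonempty Z] [Nonempty S]
    (p : X × S → ℝ) (hp0 : ∀ a, 0 ≤ p a) (hp1 : ∑ a, p a = 1)
    (hpX : ∀ x, 0 < margX p x)
    (β : ℝ) (hβ : 0 < β)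
    (q : X → Z → ℝ) (hq : q ∈ condFamilies X Z)
    (hmin : IsLocalMinOn (ibLagrangian p β) (condFamilies X Z) q) :
    ∀ x z, q x z = margZ p q z * Real.exp (-β * klCond p q x z) / partitionFn p β q x := by
  intro x0 z0
  obtain ⟨hqpos, hqsum⟩ := hq
  have hQpos : ∀ z, 0 < margZ p q z := margZ_pos' p hpX q hqpos
  set F : Z → ℝ := fun z =>
    Real.log (q x0 z) - Real.log (margZ p q z) + β * klCond p q x0 z with hF
  have hstat : ∀ z, F z = F z0 :=
    fun z => stationarity p hp0 hpX β q ⟨hqpos, hqsum⟩ hmin x0 z z0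
  have hform : ∀ z, margZ p q z * Real.exp (-β * klCond p q x0 z)
      = q x0 z * Real.exp (-(F z)) := by
    intro z
    rw [hF]; dsimp only
    rw [show -(Real.log (q x0 z) - Real.log (margZ p q z) + β * klCond p q x0 z)
        = (Real.log (margZ p q z) - Real.log (q x0 z)) + -β * klCond p q x0 z from by ring,
      Real.exp_add, Real.exp_sub, Real.exp_log (hQpos z), Real.exp_log (hqpos x0 z)]
    field_simp
    rw [mul_div_assoc, div_self (hqpos x0 z).ne', mul_one]
  have hpart : partitionFn p β q x0 = Real.exp (-(F z0)) := by
    rw [partitionFn]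
    calc ∑ z', margZ p q z' * Real.exp (-β * klCond p q x0 z')
        = ∑ z', q x0 z' * Real.exp (-(F z0)) := by
          refine Finset.sum_congr rfl fun z _ => ?_
          rw [hform z, hstat z]
      _ = (∑ z', q x0 z') * Real.exp (-(F z0)) := by rw [Finset.sum_mul]
      _ = Real.exp (-(F z0)) := by rw [hqsum x0, one_mul]
  rw [hpart, hform z0, mul_div_assoc, div_self (Real.exp_ne_zero _), mul_one]
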